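/- Let f : ℝ^d → ℝ be a differentiable convex function with minimizer x* ∈ ℝ^d, and let c ≥ 0. Then for every x ∈ ℝ^d, f(x) − f(x*) + c ≤ √((‖∇f(x)‖² + c)·(‖x − x*‖² + c)). -/
import Mathlib


open RealInnerProductSpace

/-- **Lemma (Lyapunov product upper bound, deterministic core).**
For a differentiable convex `f : ℝ^d → ℝ` with minimizer `x*` and any `c ≥ 0`,
`f(x) - f(x*) + c ≤ √((‖∇f(x)‖² + c)(‖x - x*‖² + c))` for every `x`. -/
theorem lyapunov_product_upper_bound
    {d : ℕ} (f : EuclideanSpace ℝ (Fin d) → ℝ)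
    (hdiff : Differentiable ℝ f)
    (hconv : ∀ x y, 0 ≤ f x - f y - ⟪gradient f y, x - y⟫)
    (xstar : EuclideanSpace ℝ (Fin d)) (hmin : ∀ x, f xstar ≤ f x)
    (c : ℝ) (hc : 0 ≤ c) :
    ∀ x, f x - f xstar + c ≤
      Real.sqrt ((‖gradient f x‖ ^ 2 + c) * (‖x - xstar‖ ^ 2 + c)) := by
  intro x
  set g := gradient f x
  set v := x - xstar
  have h1 : f x - f xstar ≤ ⟪g, v⟫ := by
    have := hconv xstar x
    have hsym : ⟪g, xstar - x⟫ = -⟪g, v⟫ := by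
      rw [show xstar - x = -v from (neg_sub x xstar).symm, inner_neg_right]
    linarith [this, hsym.ge, hsym.le]
  have h2 : ⟪g, v⟫ ≤ ‖g‖ * ‖v‖ := real_inner_le_norm g v
  have h3 : f x - f xstar + c ≤ ‖g‖ * ‖v‖ + c := by linarith
  refine h3.trans ((Real.le_sqrt (by positivity) (by positivity)).mpr ?_)
  have hamgm : 2 * c * (‖g‖ * ‖v‖) ≤ c * ‖g‖ ^ 2 + c * ‖v‖ ^ 2 := by
    nlinarith [sq_nonneg (‖g‖ - ‖v‖), norm_nonneg g, norm_nonneg v]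
  nlinarith [norm_nonneg g, norm_nonneg v, sq_nonneg c]
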